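/- Let b ∈ (0,1) with g(b) < 0. Define M(b,R) = inf { F^lin_{b,Q_R}(u) / (∫_{Q_R}|u|⁴)^{1/2} : u ∈ H¹₀(Q_R) \ {0} }, where F^lin_{b,Q_R}(u) = ∫_{Q_R}( b|(∇-iF)u|² - |u|² )dx. Then for all R > 1, M(b,R) ≥ -R^{3/2}(-2g(b))^{1/2}. -/

import Mathlib

open MeasureTheory Complex

noncomputable section

/-- Three-dimensional Euclidean space. -/
abbrev V3 := EuclideanSpace ℝ (Fin 3)

/-- The magnetic potential `F(x) = (-x₂/2, x₁/2, 0)`. -/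
def Fpot : V3 → V3 := fun x => (EuclideanSpace.equiv (Fin 3) ℝ).symm ![-(x 1) / 2, x 0 / 2, 0]

/-- The `j`-th component of the magnetic gradient `(∇ - i a)u` at `x`. -/
def magD (a : V3 → V3) (u : V3 → ℂ) (j : Fin 3) (x : V3) : ℂ :=
  fderiv ℝ u x (EuclideanSpace.single j 1) - Complex.I * (a x j : ℝ) * u x

/-- The open cube `Q_R = (-R/2, R/2)³`. -/
def cube (R : ℝ) : Set V3 := {x | ∀ j, |x j| < R / 2}

/-- Smooth compactly supported functions in `Q_R`: the core of `H¹₀(Q_R; ℂ)`. -/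
def H10 (R : ℝ) : Set (V3 → ℂ) :=
  {u | ContDiff ℝ 1 u ∧ HasCompactSupport u ∧ tsupport u ⊆ cube R}

/-- The linear part `F^lin_{b,Q_R}(u) = ∫_{Q_R} ( b|(∇ - iF)u|² - |u|² ) dx`. -/
def GLlin (b R : ℝ) (u : V3 → ℂ) : ℝ :=
  ∫ x in cube R, (b * ∑ j, ‖magD Fpot u j x‖ ^ 2 - ‖u x‖ ^ 2)

/-- The full reduced Ginzburg–Landau functional `F_{b,Q_R} = F^lin + ½∫|u|⁴`. -/
def GLfun (b R : ℝ) (u : V3 → ℂ) : ℝ :=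
  GLlin b R u + (1 / 2) * ∫ x in cube R, ‖u x‖ ^ 4

/-- The 3D Dirichlet ground-state energy `M₀(b,R)`. -/
def M0 (b R : ℝ) : ℝ := sInf (GLfun b R '' H10 R)

/-- The non-linear eigenvalue `𝓜₀(b,R) = inf F^lin(u)/(∫|u|⁴)^{1/2}` over nonzero
`u ∈ H¹₀(Q_R)`. -/
def Mcal (b R : ℝ) : ℝ :=
  sInf ((fun u => GLlin b R u / Real.sqrt (∫ x in cube R, ‖u x‖ ^ 4)) ''
    {u | u ∈ H10 R ∧ u ≠ 0})

section Aux

lemma cube_isOpen (R : ℝ) : IsOpen (cube R) := by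
  have h : cube R = ⋂ j : Fin 3, (fun x : V3 => x j) ⁻¹' {y : ℝ | |y| < R / 2} := by
    ext x; simp [cube, Set.mem_iInter]
  rw [h]
  exact isOpen_iInter_of_finite fun j =>
    (isOpen_lt (_root_.continuous_abs) continuous_const).preimage (EuclideanSpace.proj (𝕜 := ℝ) j).continuous

lemma cube_subset_ball (R : ℝ) : cube R ⊆ Metric.closedBall 0 (2 * |R|) := by
  intro x hx
  have hR : 0 < R := by
    have h0 := hx 0
    have := abs_nonneg (x 0)
    linarith
  rw [Metric.mem_closedBall, dist_zero_right, EuclideanSpace.norm_eq]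
  have hb : ∀ j : Fin 3, ‖x j‖ ^ 2 ≤ R ^ 2 := by
    intro j
    have h1 := hx j
    have h2 := abs_nonneg (x j)
    have : |x j| ≤ R := by linarith
    calc ‖x j‖ ^ 2 = |x j| ^ 2 := by rw [Real.norm_eq_abs]
      _ ≤ R ^ 2 := by nlinarith
  have hsum : (∑ j : Fin 3, ‖x j‖ ^ 2) ≤ 4 * R ^ 2 := by
    have := Finset.sum_le_sum (s := Finset.univ) (fun j _ => hb j)
    simp only [Finset.sum_const, Finset.card_univ, Fintype.card_fin, nsmul_eq_mul] at this
    push_cast at this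
    nlinarith
  calc Real.sqrt (∑ j : Fin 3, ‖x j‖ ^ 2) ≤ Real.sqrt (4 * R ^ 2) := Real.sqrt_le_sqrt hsum
    _ = 2 * R := by
        rw [show (4 : ℝ) * R ^ 2 = (2 * R) ^ 2 by ring, Real.sqrt_sq (by linarith)]
    _ ≤ 2 * |R| := by rw [abs_of_pos hR]

lemma integrableOn_cube {f : V3 → ℝ} (hf : Continuous f) (R : ℝ) :
    MeasureTheory.IntegrableOn f (cube R) := by
  exact (hf.continuousOn.integrableOn_compact
    (isCompact_closedBall (0 : V3) (2 * |R|))).mono_set (cube_subset_ball R)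

lemma volume_cube_lt_top (R : ℝ) : volume (cube R) < ⊤ :=
  lt_of_le_of_lt (measure_mono (cube_subset_ball R)) measure_closedBall_lt_top

lemma continuous_Fpot_comp (j : Fin 3) : Continuous fun x : V3 => (Fpot x j : ℝ) := by
  have h : ∀ x : V3, Fpot x j = ![-(x 1) / 2, x 0 / 2, 0] j := fun x => rfl
  simp only [h]
  fin_cases j
  · simpa using ((EuclideanSpace.proj (𝕜 := ℝ) (1 : Fin 3)).continuous.neg.div_const 2)
  · simpa using ((EuclideanSpace.proj (𝕜 := ℝ) (0 : Fin 3)).continuous.div_const 2)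
  · simpa using (continuous_const : Continuous fun _ : V3 => (0 : ℝ))

lemma continuous_magD {u : V3 → ℂ} (hu : ContDiff ℝ 1 u) (j : Fin 3) :
    Continuous (magD Fpot u j) := by
  unfold magD
  apply Continuous.sub
  · exact (hu.continuous_fderiv one_ne_zero).clm_apply continuous_const
  · exact (continuous_const.mul
      (Complex.continuous_ofReal.comp (continuous_Fpot_comp j))).mul (hu.continuous)

lemma continuous_lin_integrand (b : ℝ) {u : V3 → ℂ} (hu : ContDiff ℝ 1 u) :
    Continuous fun x => b * ∑ j, ‖magD Fpot u j x‖ ^ 2 - ‖u x‖ ^ 2 := by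
  apply Continuous.sub
  · exact continuous_const.mul
      (continuous_finset_sum _ fun j _ => (continuous_magD hu j).norm.pow 2)
  · exact hu.continuous.norm.pow 2

lemma GLfun_lower (b R : ℝ) (hb : 0 ≤ b) {u : V3 → ℂ} (hu : u ∈ H10 R) :
    -((volume (cube R)).toReal) / 2 ≤ GLfun b R u := by
  obtain ⟨h1, h2, h3⟩ := hu
  have hf : MeasureTheory.IntegrableOn
      (fun x => b * ∑ j, ‖magD Fpot u j x‖ ^ 2 - ‖u x‖ ^ 2) (cube R) :=
    integrableOn_cube (continuous_lin_integrand b h1) R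
  have hq : MeasureTheory.IntegrableOn (fun x => (1 / 2 : ℝ) * ‖u x‖ ^ 4) (cube R) :=
    integrableOn_cube (continuous_const.mul (h1.continuous.norm.pow 4)) R
  have hcomb : GLfun b R u = ∫ x in cube R,
      ((b * ∑ j, ‖magD Fpot u j x‖ ^ 2 - ‖u x‖ ^ 2) + (1 / 2 : ℝ) * ‖u x‖ ^ 4) := by
    unfold GLfun GLlin
    rw [MeasureTheory.integral_add hf hq]
    congr 1
    rw [← smul_eq_mul, ← MeasureTheory.integral_smul]
    simp [smul_eq_mul]
  rw [hcomb]
  have hconst : MeasureTheory.IntegrableOn (fun _ : V3 => (-(1 / 2) : ℝ)) (cube R) :=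
    MeasureTheory.integrableOn_const (volume_cube_lt_top R).ne
  have hmono := MeasureTheory.setIntegral_mono_on hconst (hf.add hq)
    (cube_isOpen R).measurableSet (fun x _ => by
      simp only [Pi.add_apply]
      have hsum : (0 : ℝ) ≤ ∑ j, ‖magD Fpot u j x‖ ^ 2 :=
        Finset.sum_nonneg fun j _ => sq_nonneg _
      have h4 : ‖u x‖ ^ 4 = (‖u x‖ ^ 2) ^ 2 := by ring
      nlinarith [sq_nonneg (‖u x‖ ^ 2 - 1), mul_nonneg hb hsum])
  rw [MeasureTheory.setIntegral_const, smul_eq_mul] at hmono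
  simp only [Pi.add_apply] at hmono
  linarith [show volume.real (cube R) = (volume (cube R)).toReal from rfl]

lemma smul_mem_H10 (R t : ℝ) {u : V3 → ℂ} (hu : u ∈ H10 R) :
    (fun x => (t : ℂ) * u x) ∈ H10 R := by
  obtain ⟨h1, h2, h3⟩ := hu
  refine ⟨contDiff_const.mul h1, HasCompactSupport.mul_left h2, ?_⟩
  exact (closure_mono (Function.support_mul_subset_right _ _)).trans h3

lemma GLfun_scale (b R t : ℝ) (ht : 0 ≤ t) {u : V3 → ℂ} (hu : ContDiff ℝ 1 u) :
    GLfun b R (fun x => (t : ℂ) * u x)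
      = t ^ 2 * GLlin b R u + (1 / 2) * (t ^ 4 * ∫ x in cube R, ‖u x‖ ^ 4) := by
  have hmag : ∀ (j : Fin 3) (x : V3),
      magD Fpot (fun y => (t : ℂ) * u y) j x = (t : ℂ) * magD Fpot u j x := by
    intro j x
    unfold magD
    rw [fderiv_const_mul (hu.differentiable one_ne_zero x)]
    simp only [ContinuousLinearMap.smul_apply, smul_eq_mul]
    ring
  have hnorm : ∀ z : ℂ, ‖(t : ℂ) * z‖ ^ 2 = t ^ 2 * ‖z‖ ^ 2 := fun z => by
    rw [norm_mul, Complex.norm_real, Real.norm_eq_abs, _root_.abs_of_nonneg ht]; ring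
  have hnorm4 : ∀ z : ℂ, ‖(t : ℂ) * z‖ ^ 4 = t ^ 4 * ‖z‖ ^ 4 := fun z => by
    rw [norm_mul, Complex.norm_real, Real.norm_eq_abs, _root_.abs_of_nonneg ht]; ring
  unfold GLfun GLlin
  congr 1
  · calc (∫ x in cube R, (b * ∑ j, ‖magD Fpot (fun y => (t : ℂ) * u y) j x‖ ^ 2
            - ‖(t : ℂ) * u x‖ ^ 2))
        = ∫ x in cube R, t ^ 2 • (b * ∑ j, ‖magD Fpot u j x‖ ^ 2 - ‖u x‖ ^ 2) := by
          apply MeasureTheory.integral_congr_ae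
          filter_upwards with x
          simp only [hmag, hnorm, smul_eq_mul, Finset.mul_sum]
          ring_nf
          rw [Finset.mul_sum]
          ring_nf
      _ = t ^ 2 * GLlin b R u := by rw [MeasureTheory.integral_smul]; rfl
  · congr 1
    calc (∫ x in cube R, ‖(t : ℂ) * u x‖ ^ 4)
        = ∫ x in cube R, t ^ 4 • ‖u x‖ ^ 4 := by
          apply MeasureTheory.integral_congr_ae
          filter_upwards with x
          rw [hnorm4, smul_eq_mul]
      _ = t ^ 4 * ∫ x in cube R, ‖u x‖ ^ 4 := by rw [MeasureTheory.integral_smul]; rfl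

end Aux

/-- for `b ∈ (0,1)` with `g(b) ∈ [-1/2, 0)` and `g(b) ≤ M₀(b,R)/R³` for all
`R ≥ 1`, one has `𝓜₀(b,R) ≥ -R^{3/2}(-2g(b))^{1/2}` for all `R > 1`. -/
theorem stmt_3 (g : ℝ → ℝ) (b : ℝ) (hb : b ∈ Set.Ioo (0 : ℝ) 1)
    (hgb : g b ∈ Set.Ico (-(1 / 2) : ℝ) 0)
    (hlow : ∀ R ≥ (1 : ℝ), g b ≤ M0 b R / R ^ 3) :
    ∀ R > (1 : ℝ), Mcal b R ≥ -(R ^ ((3 : ℝ) / 2)) * Real.sqrt (-2 * g b) := by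
  obtain ⟨hb0, hb1⟩ := hb
  obtain ⟨hg1, hg2⟩ := hgb
  intro R hR
  have hR0 : (0 : ℝ) < R := by linarith
  set c := -(R ^ ((3 : ℝ) / 2)) * Real.sqrt (-2 * g b) with hc
  have hrp : (0 : ℝ) ≤ R ^ ((3 : ℝ) / 2) := Real.rpow_nonneg hR0.le _
  have hc0 : c ≤ 0 := by
    rw [hc, neg_mul]
    exact neg_nonpos.2 (mul_nonneg hrp (Real.sqrt_nonneg _))
  rw [ge_iff_le, Mcal]
  rcases Set.eq_empty_or_nonempty
      ((fun u => GLlin b R u / Real.sqrt (∫ x in cube R, ‖u x‖ ^ 4)) ''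
        {u | u ∈ H10 R ∧ u ≠ 0}) with he | hne
  · rw [he, Real.sInf_empty]; exact hc0
  refine le_csInf hne ?_
  rintro y ⟨u, ⟨huH, -⟩, rfl⟩
  set A := GLlin b R u with hA
  set B := ∫ x in cube R, ‖u x‖ ^ 4 with hB
  show c ≤ A / Real.sqrt B
  have hB0 : (0 : ℝ) ≤ B := MeasureTheory.integral_nonneg fun x => by positivity
  have hM0 : g b * R ^ 3 ≤ M0 b R := by
    have h := hlow R hR.le
    rwa [le_div_iff₀ (by positivity)] at h
  have hkey : ∀ s : ℝ, 0 ≤ s → g b * R ^ 3 ≤ s * A + s ^ 2 * B / 2 := by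
    intro s hs
    set t := Real.sqrt s with htdef
    have ht0 : 0 ≤ t := Real.sqrt_nonneg s
    have ht2 : t ^ 2 = s := Real.sq_sqrt hs
    have ht4 : t ^ 4 = s ^ 2 := by rw [show t ^ 4 = (t ^ 2) ^ 2 by ring, ht2]
    have hw : (fun x => (t : ℂ) * u x) ∈ H10 R := smul_mem_H10 R t huH
    have hval := GLfun_scale b R t ht0 huH.1
    have hle : M0 b R ≤ GLfun b R (fun x => (t : ℂ) * u x) := by
      apply csInf_le
      · refine ⟨-((volume (cube R)).toReal) / 2, ?_⟩
        rintro z ⟨v, hv, rfl⟩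
        exact GLfun_lower b R hb0.le hv
      · exact ⟨_, hw, rfl⟩
    have h2 : g b * R ^ 3 ≤ t ^ 2 * A + 1 / 2 * (t ^ 4 * B) := hM0.trans (hle.trans hval.le)
    rw [ht2, ht4] at h2
    linarith
  by_cases hBz : Real.sqrt B = 0
  · rw [hBz, div_zero]; exact hc0
  have hBpos : 0 < B := by
    rcases lt_or_eq_of_le hB0 with h | h
    · exact h
    · exact absurd (by rw [← h, Real.sqrt_zero]) hBz
  have hsB : 0 < Real.sqrt B := Real.sqrt_pos.2 hBpos
  rcases le_or_gt 0 A with hApos | hAneg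
  · exact hc0.trans (div_nonneg hApos hsB.le)
  have hs := hkey (-A / B) (le_of_lt (div_pos (neg_pos.2 hAneg) hBpos))
  have heq : (-A / B) * A + (-A / B) ^ 2 * B / 2 = -(A ^ 2) / (2 * B) := by
    field_simp; ring
  rw [heq] at hs
  have hA2 : A ^ 2 ≤ (-2 * g b * R ^ 3) * B := by
    rw [le_div_iff₀ (by positivity)] at hs
    nlinarith
  have hAbs : -A ≤ Real.sqrt ((-2 * g b * R ^ 3) * B) := by
    have h1 : -A = Real.sqrt (A ^ 2) := by
      rw [Real.sqrt_sq_eq_abs, abs_of_neg hAneg]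
    rw [h1]
    exact Real.sqrt_le_sqrt hA2
  rw [le_div_iff₀ hsB]
  have hpow : R ^ ((3 : ℝ) / 2) = Real.sqrt (R ^ 3) := by
    rw [Real.sqrt_eq_rpow, ← Real.rpow_natCast R 3, ← Real.rpow_mul hR0.le]
    norm_num
  have hgneg : (0 : ℝ) ≤ -2 * g b := by linarith
  have hceq : c * Real.sqrt B = -Real.sqrt ((-2 * g b * R ^ 3) * B) := by
    rw [hc, hpow, neg_mul, neg_mul]
    congr 1
    rw [← Real.sqrt_mul (by positivity : (0:ℝ) ≤ R ^ 3) (-2 * g b),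
      ← Real.sqrt_mul (mul_nonneg (by positivity) hgneg) B]
    congr 1
    ring
  linarith [hAbs, hceq]
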